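/- Generalized Fubini theorem: Let f : X×Y → [0,∞] be measurable with respect to the σ-algebra 𝔄★𝔅 = σ((𝔄⊗𝔅) ∪ M*), and let R_★ be the extension of the product measure P×Q to 𝔄★𝔅. Then for Q-a.e. y the section f(·,y) is 𝔄-measurable, for P-a.e. x the section f(x,·) is 𝔅-measurable, and ∫_{X×Y} f dR_★ = ∫_Y (∫_X f(x,y) dP(x)) dQ(y) = ∫_X (∫_Y f(x,y) dQ(y)) dP(x). -/

import Mathlib

open MeasureTheory Set
open scoped symmDiff ENNReal

/-- The σ-ideal `M*` of nil sets. -/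
def nilStar {X Y : Type*} [MeasurableSpace X] [MeasurableSpace Y]
    (P : Measure X) (Q : Measure Y) : Set (Set (X × Y)) :=
  {E | (∃ N : Set X, MeasurableSet N ∧ P N = 0 ∧ ∀ x ∉ N, Q {y | (x, y) ∈ E} = 0) ∧
       (∃ M : Set Y, MeasurableSet M ∧ Q M = 0 ∧ ∀ y ∉ M, P {x | (x, y) ∈ E} = 0)}

/-- The σ-algebra `𝔄★𝔅 = σ((𝔄⊗𝔅) ∪ M*)`. -/
def bigStarSigma {X Y : Type*} [MeasurableSpace X] [MeasurableSpace Y]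
    (P : Measure X) (Q : Measure Y) : MeasurableSpace (X × Y) :=
  MeasurableSpace.generateFrom ({E | MeasurableSet E} ∪ nilStar P Q)

section Aux

variable {X Y : Type*} [MeasurableSpace X] [MeasurableSpace Y]
  {P : Measure X} {Q : Measure Y}

theorem nilStar_mono {E F : Set (X × Y)} (hEF : E ⊆ F) (hF : F ∈ nilStar P Q) :
    E ∈ nilStar P Q := by
  obtain ⟨⟨N, hN, hN0, hNx⟩, ⟨M, hM, hM0, hMy⟩⟩ := hF
  refine ⟨⟨N, hN, hN0, fun x hx => ?_⟩, ⟨M, hM, hM0, fun y hy => ?_⟩⟩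
  · exact measure_mono_null (fun y hy => hEF hy) (hNx x hx)
  · exact measure_mono_null (fun x hx => hEF hx) (hMy y hy)

theorem nilStar_empty : (∅ : Set (X × Y)) ∈ nilStar P Q :=
  ⟨⟨∅, MeasurableSet.empty, measure_empty, fun _ _ => by simp⟩,
   ⟨∅, MeasurableSet.empty, measure_empty, fun _ _ => by simp⟩⟩

theorem nilStar_iUnion {ι : Type*} [Countable ι] {E : ι → Set (X × Y)}
    (hE : ∀ i, E i ∈ nilStar P Q) : (⋃ i, E i) ∈ nilStar P Q := by
  choose N hN hN0 hNx using fun i => (hE i).1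
  choose M hM hM0 hMy using fun i => (hE i).2
  refine ⟨⟨⋃ i, N i, MeasurableSet.iUnion hN, measure_iUnion_null hN0, fun x hx => ?_⟩,
    ⟨⋃ i, M i, MeasurableSet.iUnion hM, measure_iUnion_null hM0, fun y hy => ?_⟩⟩
  · have : {y | (x, y) ∈ ⋃ i, E i} = ⋃ i, {y | (x, y) ∈ E i} := by
      ext y; simp [mem_iUnion]
    rw [this]
    exact measure_iUnion_null fun i => hNx i x (fun h => hx (mem_iUnion.2 ⟨i, h⟩))
  · have : {x | (x, y) ∈ ⋃ i, E i} = ⋃ i, {x | (x, y) ∈ E i} := by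
      ext x; simp [mem_iUnion]
    rw [this]
    exact measure_iUnion_null fun i => hMy i y (fun h => hy (mem_iUnion.2 ⟨i, h⟩))

theorem exists_approx_set {E : Set (X × Y)}
    (hE : MeasurableSet[bigStarSigma P Q] E) :
    ∃ A : Set (X × Y), MeasurableSet A ∧ E ∆ A ∈ nilStar P Q := by
  have hE' : MeasurableSet[MeasurableSpace.generateFrom
      ({E | MeasurableSet E} ∪ nilStar P Q)] E := hE
  clear hE
  induction E, hE' using MeasurableSpace.generateFrom_induction with
  | hC t ht _ =>
    rcases ht with ht | ht
    · exact ⟨t, ht, by simpa [symmDiff_self] using (nilStar_empty (P := P) (Q := Q))⟩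
    · exact ⟨∅, MeasurableSet.empty, by simpa [Set.symmDiff_def] using ht⟩
  | empty => exact ⟨∅, MeasurableSet.empty, by simpa [symmDiff_self] using
      (nilStar_empty (P := P) (Q := Q))⟩
  | compl t ht iht =>
    obtain ⟨A, hA, hnil⟩ := iht
    exact ⟨Aᶜ, hA.compl, by rwa [compl_symmDiff_compl]⟩
  | iUnion s hs ihs =>
    choose A hA hnil using ihs
    refine ⟨⋃ i, A i, MeasurableSet.iUnion hA, nilStar_mono ?_ (nilStar_iUnion hnil)⟩
    intro p hp
    rcases hp with hp | hp
    · obtain ⟨hp1, hp2⟩ := hp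
      obtain ⟨i, hi⟩ := mem_iUnion.1 hp1
      exact mem_iUnion.2 ⟨i, Or.inl ⟨hi, fun h => hp2 (mem_iUnion.2 ⟨i, h⟩)⟩⟩
    · obtain ⟨hp1, hp2⟩ := hp
      obtain ⟨i, hi⟩ := mem_iUnion.1 hp1
      exact mem_iUnion.2 ⟨i, Or.inr ⟨hi, fun h => hp2 (mem_iUnion.2 ⟨i, h⟩)⟩⟩

theorem exists_approx_fun {f : X × Y → ℝ≥0∞}
    (hf : @Measurable _ _ (bigStarSigma P Q) _ f) :
    ∃ g : X × Y → ℝ≥0∞, Measurable g ∧ ∃ M ∈ nilStar P Q, ∀ p ∉ M, f p = g p := by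
  have hE : ∀ q : ℚ, MeasurableSet[bigStarSigma P Q]
      (f ⁻¹' Set.Ioi ((Real.toNNReal q : ℝ≥0∞))) :=
    fun q => hf measurableSet_Ioi
  choose A hA hnil using fun q : ℚ => exists_approx_set (hE q)
  refine ⟨fun p => ⨆ q : ℚ, (A q).indicator (fun _ => (Real.toNNReal q : ℝ≥0∞)) p,
    Measurable.iSup fun q => Measurable.indicator measurable_const (hA q),
    ⋃ q : ℚ, (f ⁻¹' Set.Ioi ((Real.toNNReal q : ℝ≥0∞))) ∆ A q,
    nilStar_iUnion hnil, fun p hp => ?_⟩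
  have hiff : ∀ q : ℚ, p ∈ A q ↔ (Real.toNNReal q : ℝ≥0∞) < f p := by
    intro q
    have hq : p ∉ (f ⁻¹' Set.Ioi ((Real.toNNReal q : ℝ≥0∞))) ∆ A q :=
      fun h => hp (mem_iUnion.2 ⟨q, h⟩)
    constructor
    · intro hpa
      by_contra hlt
      exact hq (Or.inr ⟨hpa, hlt⟩)
    · intro hlt
      by_contra hpa
      exact hq (Or.inl ⟨hlt, hpa⟩)
  refine le_antisymm ?_ (iSup_le fun q => ?_)
  · by_contra hlt
    push_neg at hlt
    obtain ⟨q, _, h1, h2⟩ := ENNReal.lt_iff_exists_rat_btwn.1 hlt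
    have hpa : p ∈ A q := (hiff q).2 h2
    have : (Real.toNNReal q : ℝ≥0∞) ≤
        ⨆ q : ℚ, (A q).indicator (fun _ => (Real.toNNReal q : ℝ≥0∞)) p := by
      refine le_iSup_of_le q ?_
      rw [Set.indicator_of_mem hpa]
    exact absurd (lt_of_le_of_lt this h1) (lt_irrefl _)
  · by_cases hpa : p ∈ A q
    · rw [Set.indicator_of_mem hpa]
      exact le_of_lt ((hiff q).1 hpa)
    · rw [Set.indicator_of_notMem hpa]
      exact zero_le

end Aux

/-- generalized Fubini theorem for nonnegative functions:
if `f : X×Y → [0,∞]` is `𝔄★𝔅`-measurable and `R_★` extends `P×Q` to `𝔄★𝔅`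
(vanishing on `M*`), then a.e. sections of `f` are measurable and the integral of
`f` w.r.t. `R_★` equals both iterated integrals. -/
theorem generalized_fubini_lintegral {X Y : Type*} [MeasurableSpace X] [MeasurableSpace Y]
    (P : Measure X) (Q : Measure Y) [IsProbabilityMeasure P] [IsProbabilityMeasure Q]
    (hP : P.IsComplete) (hQ : Q.IsComplete)
    (Rstar : @Measure (X × Y) (bigStarSigma P Q))
    (hRstar : ∀ E : Set (X × Y), MeasurableSet E → Rstar E = (P.prod Q) E)
    (hRnull : ∀ M ∈ nilStar P Q, Rstar M = 0)
    (f : X × Y → ℝ≥0∞) (hf : @Measurable _ _ (bigStarSigma P Q) _ f) :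
    (∀ᵐ y ∂Q, Measurable fun x => f (x, y)) ∧
    (∀ᵐ x ∂P, Measurable fun y => f (x, y)) ∧
    (∫⁻ p, f p ∂ Rstar) = ∫⁻ y, ∫⁻ x, f (x, y) ∂P ∂Q ∧
    (∫⁻ p, f p ∂ Rstar) = ∫⁻ x, ∫⁻ y, f (x, y) ∂Q ∂P := by
  haveI := hP
  haveI := hQ
  obtain ⟨g, hg, M, hMnil, hfg⟩ := exists_approx_fun hf
  obtain ⟨⟨N, hN, hN0, hNx⟩, ⟨MY, hMY, hMY0, hMYy⟩⟩ := hMnil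
  -- the inclusion of σ-algebras
  have hle : (inferInstance : MeasurableSpace (X × Y)) ≤ bigStarSigma P Q :=
    fun s hs => MeasurableSpace.measurableSet_generateFrom (Or.inl hs)
  -- a.e. measurability of sections and section-integral equality (Y side)
  have hsecY : ∀ y ∉ MY, (Measurable fun x => f (x, y)) ∧
      (∫⁻ x, f (x, y) ∂P) = ∫⁻ x, g (x, y) ∂P := by
    intro y hy
    have hnull : P {x | (x, y) ∈ M} = 0 := hMYy y hy
    have hae : (fun x => f (x, y)) =ᵐ[P] fun x => g (x, y) := by
      refine measure_mono_null (fun x hx => ?_) hnull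
      simp only [Set.mem_setOf_eq] at hx ⊢
      by_contra hxM
      exact hx (hfg (x, y) hxM)
    exact ⟨(hg.comp (measurable_prodMk_right)).congr_ae hae.symm,
      lintegral_congr_ae hae⟩
  have hsecX : ∀ x ∉ N, (Measurable fun y => f (x, y)) ∧
      (∫⁻ y, f (x, y) ∂Q) = ∫⁻ y, g (x, y) ∂Q := by
    intro x hx
    have hnull : Q {y | (x, y) ∈ M} = 0 := hNx x hx
    have hae : (fun y => f (x, y)) =ᵐ[Q] fun y => g (x, y) := by
      refine measure_mono_null (fun y hy => ?_) hnull
      simp only [Set.mem_setOf_eq] at hy ⊢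
      by_contra hyM
      exact hy (hfg (x, y) hyM)
    exact ⟨(hg.comp (measurable_prodMk_left)).congr_ae hae.symm,
      lintegral_congr_ae hae⟩
  have haeY : ∀ᵐ y ∂Q, y ∉ MY := by
    rw [ae_iff]
    simp only [not_not, Set.setOf_mem_eq]
    exact hMY0
  have haeX : ∀ᵐ x ∂P, x ∉ N := by
    rw [ae_iff]
    simp only [not_not, Set.setOf_mem_eq]
    exact hN0
  -- integral over Rstar
  have hRf : (∫⁻ p, f p ∂ Rstar) = ∫⁻ p, g p ∂(P.prod Q) := by
    have hfgae : f =ᵐ[Rstar] g := by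
      refine measure_mono_null (fun p hp => ?_) (hRnull M ⟨⟨N, hN, hN0, hNx⟩,
        ⟨MY, hMY, hMY0, hMYy⟩⟩)
      by_contra hpM
      exact hp (hfg p hpM)
    rw [lintegral_congr_ae hfgae]
    have htrim : Rstar.trim hle = P.prod Q := by
      refine Measure.ext fun s hs => ?_
      rw [trim_measurableSet_eq hle hs, hRstar s hs]
    rw [← htrim, lintegral_trim hle hg]
  refine ⟨haeY.mono fun y hy => (hsecY y hy).1, haeX.mono fun x hx => (hsecX x hx).1, ?_, ?_⟩
  · rw [hRf, lintegral_prod_symm _ hg.aemeasurable]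
    exact (lintegral_congr_ae (haeY.mono fun y hy => (hsecY y hy).2)).symm
  · rw [hRf, lintegral_prod _ hg.aemeasurable]
    exact (lintegral_congr_ae (haeX.mono fun x hx => (hsecX x hx).2)).symm
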